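/- Defeaturing error identity (negative feature): let Ω = Ω₀ ∖ F̄ with F a negative feature, u the weak solution of −Δu = f in Ω with u = h on Γ_D and ∂u/∂n = g on Γ_N ⊃ γ, and u₀ the weak solution of the defeatured problem on Ω₀ (same data, with Neumann datum g₀ on γ₀ = ∂F ∖ γ̄). Then e := u − u₀|_Ω ∈ H¹_{0,Γ_D}(Ω) satisfies, for all v ∈ H¹_{0,Γ_D}(Ω), ∫_Ω ∇e·∇v dx = ∫_γ d_γ v ds, where d_γ = g + ∂u₀/∂n_F on γ. -/
import Mathlib


open MeasureTheory Set
open scoped RealInnerProductSpace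

noncomputable section

/-- Defeaturing error identity (negative feature): if `u` is the weak solution of the exact
problem on `Ω` (volume measure `μ`, boundary measure `ν`, Neumann datum `g` on `Γ_N ⊇ γ`) and
`u₀` the defeatured solution, whose restriction to `Ω` satisfies the weak form with Neumann
datum `−∂u₀/∂n_F` on `γ`, then the error `e = u − u₀|_Ω` satisfies, for all test functions
`v ∈ H¹_{0,Γ_D}(Ω)` (membership modeled by the predicate `T`),
`∫_Ω ∇e·∇v = ∫_γ d_γ v` with `d_γ = g + ∂u₀/∂n_F`. -/
theorem defeaturing_error_identity
    (n : ℕ)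
    (Ω ΓN γ : Set (EuclideanSpace ℝ (Fin n))) (hγΓN : γ ⊆ ΓN)
    (μ ν : Measure (EuclideanSpace ℝ (Fin n)))
    (f g : EuclideanSpace ℝ (Fin n) → ℝ)
    (nF : EuclideanSpace ℝ (Fin n) → EuclideanSpace ℝ (Fin n))
    (u u₀ : EuclideanSpace ℝ (Fin n) → ℝ)
    (T : (EuclideanSpace ℝ (Fin n) → ℝ) → Prop)  -- test space H¹_{0,Γ_D}(Ω)
    -- integrability of the various terms
    (hint : ∀ v, T v →
      Integrable (fun x => ⟪gradient u x, gradient v x⟫) (μ.restrict Ω) ∧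
      Integrable (fun x => ⟪gradient u₀ x, gradient v x⟫) (μ.restrict Ω) ∧
      Integrable (fun x => g x * v x) (ν.restrict γ) ∧
      Integrable (fun x => ⟪gradient u₀ x, nF x⟫ * v x) (ν.restrict γ))
    -- weak form of the exact problem on Ω
    (hu : ∀ v, T v →
      ∫ x in Ω, ⟪gradient u x, gradient v x⟫ ∂μ
        = ∫ x in Ω, f x * v x ∂μ + ∫ x in ΓN, g x * v x ∂ν)
    -- weak form of the defeatured problem restricted to Ω (natural Neumann datum on γ)
    (hu₀ : ∀ v, T v →
      ∫ x in Ω, ⟪gradient u₀ x, gradient v x⟫ ∂μ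
        = ∫ x in Ω, f x * v x ∂μ + ∫ x in ΓN \ γ, g x * v x ∂ν
          - ∫ x in γ, ⟪gradient u₀ x, nF x⟫ * v x ∂ν)
    -- additivity of the boundary integral over Γ_N = (Γ_N ∖ γ) ∪ γ
    (hsplit : ∀ v, T v →
      ∫ x in ΓN, g x * v x ∂ν
        = ∫ x in ΓN \ γ, g x * v x ∂ν + ∫ x in γ, g x * v x ∂ν) :
    ∀ v, T v →
      ∫ x in Ω, ⟪gradient u x - gradient u₀ x, gradient v x⟫ ∂μ
        = ∫ x in γ, (g x + ⟪gradient u₀ x, nF x⟫) * v x ∂ν := by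
  intro v hv
  obtain ⟨h1, h2, h3, h4⟩ := hint v hv
  have hsub : ∫ x in Ω, ⟪gradient u x - gradient u₀ x, gradient v x⟫ ∂μ
      = (∫ x in Ω, ⟪gradient u x, gradient v x⟫ ∂μ)
        - ∫ x in Ω, ⟪gradient u₀ x, gradient v x⟫ ∂μ := by
    rw [← integral_sub h1 h2]
    exact integral_congr_ae (Filter.Eventually.of_forall fun x => inner_sub_left _ _ _)
  have hadd : ∫ x in γ, (g x + ⟪gradient u₀ x, nF x⟫) * v x ∂ν
      = (∫ x in γ, g x * v x ∂ν) + ∫ x in γ, ⟪gradient u₀ x, nF x⟫ * v x ∂ν := by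
    rw [← integral_add h3 h4]
    exact integral_congr_ae (Filter.Eventually.of_forall fun x => add_mul _ _ _)
  rw [hsub, hu v hv, hu₀ v hv, hsplit v hv, hadd]
  ring
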